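/- arXiv:1807.10230 — 2 statements merged into one kernel-verified Lean document; each statement's English description precedes it below -/
import Mathlib

section
/- Let G be a group acting by isometries on a metric space X which contains a loxodromic isometry h (i.e. τ(h) > 0), and let H be a subgroup of G containing ⟨h⟩ as a finite index subgroup. Then for any x ∈ X and K ≥ 0, the set { g ∈ H : d(x, g·x) ≤ K } is finite. -/
open Filter

/-- If `h` is loxodromic (positive translation length) and `H` contains the
cyclic group `⟨h⟩` as a finite index subgroup, then the orbit of `x` under
`H` meets any bounded set in finitely many group elements. -/
theorem stmt_5 {G X : Type*} [Group G] [MetricSpace X] [MulAction G X]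
    (hiso : ∀ g : G, Isometry (fun z : X => g • z))
    (h : G) (H : Subgroup G)
    (hle : Subgroup.zpowers h ≤ H)
    (hindex : (Subgroup.zpowers h).relIndex H ≠ 0)
    (x : X) (L : ℝ) (hL : 0 < L)
    (hlox : Tendsto (fun n : ℕ => dist ((h ^ n) • x) x / n) atTop (nhds L))
    (K : ℝ) (hK : 0 ≤ K) :
    {g : G | g ∈ H ∧ dist x (g • x) ≤ K}.Finite := by
  -- the distance to the orbit point tends to infinity
  have hdist : Tendsto (fun n : ℕ => dist ((h ^ n) • x) x) atTop atTop := by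
    have h1 : Tendsto (fun n : ℕ => (dist ((h ^ n) • x) x / n) * n) atTop atTop :=
      Tendsto.pos_mul_atTop hL hlox tendsto_natCast_atTop_atTop
    refine h1.congr' ?_
    filter_upwards [eventually_gt_atTop 0] with n hn
    have : (n : ℝ) ≠ 0 := by positivity
    field_simp
  -- for any C, only finitely many powers of h stay within distance C
  have lemA : ∀ C : ℝ, {n : ℤ | dist ((h ^ n) • x) x ≤ C}.Finite := by
    intro C
    have hnat : {m : ℕ | dist ((h ^ m) • x) x ≤ C}.Finite := by
      obtain ⟨N, hN⟩ := (hdist.eventually_gt_atTop C).exists_forall_of_atTop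
      refine (Set.finite_Iio N).subset ?_
      intro m hm
      by_contra hmN
      exact absurd (hN m (le_of_not_gt hmN)) (not_lt.mpr hm)
    have key : ∀ n : ℤ, dist ((h ^ (-n)) • x) x = dist ((h ^ n) • x) x := by
      intro n
      have := (hiso (h ^ n)).dist_eq ((h ^ (-n)) • x) x
      simp only [smul_smul, ← zpow_add, add_neg_cancel, zpow_zero, one_smul] at this
      rw [← this, dist_comm]
    have : {n : ℤ | dist ((h ^ n) • x) x ≤ C} ⊆
        ((fun m : ℕ => (m : ℤ)) '' {m : ℕ | dist ((h ^ m) • x) x ≤ C}) ∪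
        ((fun m : ℕ => -(m : ℤ)) '' {m : ℕ | dist ((h ^ m) • x) x ≤ C}) := by
      intro n hn
      rcases le_or_gt 0 n with h0 | h0
      · left
        refine ⟨n.toNat, ?_, by simp [Int.toNat_of_nonneg h0]⟩
        have : ((n.toNat : ℤ)) = n := Int.toNat_of_nonneg h0
        simpa [← zpow_natCast h n.toNat, this] using hn
      · right
        refine ⟨(-n).toNat, ?_, ?_⟩
        · have hpos : (0:ℤ) ≤ -n := by omega
          have hcast : h ^ ((-n).toNat) = h ^ (-n) := by
            rw [← zpow_natCast, Int.toNat_of_nonneg hpos]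
          rw [Set.mem_setOf_eq, hcast, key n]
          exact hn
        · simp [Int.toNat_of_nonneg (by omega : (0:ℤ) ≤ -n)]
    exact ((hnat.image _).union (hnat.image _)).subset this
  -- finite quotient
  haveI : ((Subgroup.zpowers h).subgroupOf H).FiniteIndex := ⟨hindex⟩
  haveI : Finite (H ⧸ (Subgroup.zpowers h).subgroupOf H) :=
    Subgroup.finite_quotient_of_finiteIndex
  set Q := H ⧸ (Subgroup.zpowers h).subgroupOf H
  -- the covering set
  have hT : (⋃ q : Q, (fun n : ℤ => ((q.out : H) : G) * h ^ n) ''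
      {n : ℤ | dist ((h ^ n) • x) x ≤ K + dist (((q.out : H) : G)⁻¹ • x) x}).Finite :=
    Set.finite_iUnion fun q => (lemA _).image _
  refine hT.subset ?_
  rintro g ⟨hgH, hgK⟩
  set gH : H := ⟨g, hgH⟩
  set q : Q := QuotientGroup.mk gH
  refine Set.mem_iUnion.mpr ⟨q, ?_⟩
  set r : H := q.out
  have hq : QuotientGroup.mk r = q := QuotientGroup.out_eq' q
  have hmem : r⁻¹ * gH ∈ (Subgroup.zpowers h).subgroupOf H := by
    rw [← QuotientGroup.eq]
    exact hq
  obtain ⟨n, hn⟩ := hmem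
  have hn' : h ^ n = (r : G)⁻¹ * g := hn
  have hgeq : g = (r : G) * h ^ n := by
    rw [hn']
    group
  refine ⟨n, ?_, hgeq.symm⟩
  have hd : dist ((h ^ n) • x) x ≤ dist ((h ^ n) • x) ((r : G)⁻¹ • x) + dist ((r : G)⁻¹ • x) x :=
    dist_triangle _ _ _
  have heq : dist ((h ^ n) • x) ((r : G)⁻¹ • x) = dist x (g • x) := by
    have := (hiso (r : G)).dist_eq ((h ^ n) • x) ((r : G)⁻¹ • x)
    simp only [smul_smul] at this
    rw [← this, ← hgeq, mul_inv_cancel, one_smul, dist_comm]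
  calc dist ((h ^ n) • x) x ≤ dist x (g • x) + dist (((r : H) : G)⁻¹ • x) x := by
        rw [← heq]; exact hd
    _ ≤ K + dist (((q.out : H) : G)⁻¹ • x) x := by
        exact add_le_add_left hgK _
end

section
/- Let H be a group with an infinite cyclic subgroup ⟨t⟩ of finite index, and suppose the normal closure N of t in H is a free group. Then N is infinite cyclic and N = ⟨t⟩. -/
/-- `ℤ × ℤ` has no cyclic subgroup of finite index. -/
lemma aux_int2 (u : Multiplicative (ℤ × ℤ)) : ¬ (Subgroup.zpowers u).FiniteIndex := by
  intro hfi
  by_cases h0 : u = 1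
  · rw [h0, Subgroup.zpowers_one_eq_bot] at hfi
    exact hfi.index_ne_zero (by rw [Subgroup.index_bot]; exact Nat.card_eq_zero_of_infinite)
  · set a : ℤ := u.toAdd.1 with ha
    set b : ℤ := u.toAdd.2 with hb
    have hab : a ≠ 0 ∨ b ≠ 0 := by
      by_contra h
      push_neg at h
      apply h0
      have : u.toAdd = (0, 0) := Prod.ext h.1 h.2
      have := congrArg Multiplicative.ofAdd this
      exact this
    set ψ : ℤ × ℤ →+ ℤ := AddMonoidHom.mk' (fun p => b * p.1 - a * p.2)
      (fun p q => by simp [Prod.fst_add, Prod.snd_add]; ring) with hψ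
    set φ : Multiplicative (ℤ × ℤ) →* Multiplicative ℤ := AddMonoidHom.toMultiplicative ψ
      with hφ
    have hφ_apply : ∀ p : ℤ × ℤ, φ (Multiplicative.ofAdd p) =
        Multiplicative.ofAdd (b * p.1 - a * p.2) := fun p => rfl
    have hu_mem : u ∈ φ.ker := by
      have : φ u = Multiplicative.ofAdd (b * a - a * b) := by
        have := hφ_apply u.toAdd
        simpa using this
      rw [MonoidHom.mem_ker, this]
      norm_num [mul_comm]
    have hker_le : Subgroup.zpowers u ≤ φ.ker := Subgroup.zpowers_le.mpr hu_mem
    have hker_fi : φ.ker.FiniteIndex := Subgroup.finiteIndex_of_le hker_le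
    have hrange_inf : Infinite φ.range := by
      rcases hab with haa | hbb
      · refine Infinite.of_injective
          (fun n : ℤ => (⟨φ (Multiplicative.ofAdd (0, n)), ⟨_, rfl⟩⟩ : φ.range)) ?_
        intro n m hnm
        have h1 : φ (Multiplicative.ofAdd ((0 : ℤ), n)) =
            φ (Multiplicative.ofAdd ((0 : ℤ), m)) := congrArg Subtype.val hnm
        rw [hφ_apply, hφ_apply] at h1
        have h2 : b * 0 - a * n = b * 0 - a * m := by
          simpa using congrArg Multiplicative.toAdd h1
        simp only [mul_zero, zero_sub, neg_inj] at h2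
        exact mul_left_cancel₀ haa h2
      · refine Infinite.of_injective
          (fun n : ℤ => (⟨φ (Multiplicative.ofAdd (n, 0)), ⟨_, rfl⟩⟩ : φ.range)) ?_
        intro n m hnm
        have h1 : φ (Multiplicative.ofAdd (n, (0 : ℤ))) =
            φ (Multiplicative.ofAdd (m, (0 : ℤ))) := congrArg Subtype.val hnm
        rw [hφ_apply, hφ_apply] at h1
        have h2 : b * n - a * 0 = b * m - a * 0 := by
          simpa using congrArg Multiplicative.toAdd h1
        simp only [mul_zero, sub_zero] at h2
        exact mul_left_cancel₀ hbb h2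
    have : φ.ker.index = 0 := by
      rw [Subgroup.index_ker]
      exact Nat.card_eq_zero_of_infinite
    exact hker_fi.index_ne_zero this

/-- A group isomorphic to a free group cannot have a finite-index cyclic subgroup
unless the generating set is a subsingleton. -/
lemma aux_rank_le_one {N : Type*} [Group N] {X : Type*} (e : N ≃* FreeGroup X)
    (C : Subgroup N) (hfi : C.FiniteIndex) (c : N) (hC : C = Subgroup.zpowers c) :
    Subsingleton X := by
  constructor
  intro x y
  by_contra hxy
  haveI := Classical.decEq X
  set g' : X → Multiplicative (ℤ × ℤ) := fun z =>
    if z = x then Multiplicative.ofAdd (1, 0)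
    else if z = y then Multiplicative.ofAdd (0, 1) else 1 with hg'
  set f : N →* Multiplicative (ℤ × ℤ) := (FreeGroup.lift g').comp e.toMonoidHom with hf
  have key : ∀ m n : ℤ,
      f (e.symm ((FreeGroup.of x) ^ m * (FreeGroup.of y) ^ n)) =
        Multiplicative.ofAdd (m, n) := by
    intro m n
    have h1 : f (e.symm ((FreeGroup.of x) ^ m * (FreeGroup.of y) ^ n)) =
        FreeGroup.lift g' ((FreeGroup.of x) ^ m * (FreeGroup.of y) ^ n) := by
      simp [hf]
    rw [h1, map_mul, map_zpow, map_zpow, FreeGroup.lift_apply_of, FreeGroup.lift_apply_of]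
    have hgx : g' x = Multiplicative.ofAdd ((1 : ℤ), (0 : ℤ)) := by simp [hg']
    have hgy : g' y = Multiplicative.ofAdd ((0 : ℤ), (1 : ℤ)) := by
      have hyx : ¬ y = x := fun h => hxy h.symm
      simp [hg', hyx]
    rw [hgx, hgy, ← ofAdd_zsmul, ← ofAdd_zsmul, ← ofAdd_add]
    congr 1
    simp [Prod.ext_iff]
  have hsurj : Function.Surjective f := by
    intro u
    refine ⟨e.symm ((FreeGroup.of x) ^ u.toAdd.1 * (FreeGroup.of y) ^ u.toAdd.2), ?_⟩
    rw [key]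
    simp
  have hmap_fi : (C.map f).FiniteIndex := by
    constructor
    intro hzero
    have hdvd := Subgroup.index_map_dvd C hsurj
    rw [hzero] at hdvd
    exact hfi.index_ne_zero (Nat.eq_zero_of_zero_dvd hdvd)
  rw [hC, MonoidHom.map_zpowers] at hmap_fi
  exact aux_int2 (f c) hmap_fi

/-- If `⟨t⟩` is an infinite cyclic finite-index subgroup of `H` and the normal
closure `N` of `t` in `H` is a free group, then `N` is infinite cyclic and
`N = ⟨t⟩`. -/
theorem stmt_17 {H : Type*} [Group H] (t : H)
    (hinf : ¬ IsOfFinOrder t)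
    (hindex : (Subgroup.zpowers t).FiniteIndex)
    (hfree : IsFreeGroup (Subgroup.normalClosure {t})) :
    Subgroup.normalClosure {t} = Subgroup.zpowers t
      ∧ IsCyclic (Subgroup.normalClosure {t})
      ∧ Infinite (Subgroup.normalClosure {t}) := by
  haveI := hfree
  set N := Subgroup.normalClosure ({t} : Set H) with hN
  have htN : t ∈ N := Subgroup.subset_normalClosure rfl
  have hle : Subgroup.zpowers t ≤ N := Subgroup.zpowers_le.mpr htN
  haveI : N.FiniteIndex := Subgroup.finiteIndex_of_le hle
  -- the copy of ⟨t⟩ inside N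
  set C : Subgroup N := (Subgroup.zpowers t).subgroupOf N with hCdef
  have hCfi : C.FiniteIndex := by
    constructor
    intro hzero
    have := Subgroup.relIndex_mul_index hle
    have hrel : (Subgroup.zpowers t).relIndex N = C.index := rfl
    rw [hrel, hzero, zero_mul] at this
    exact hindex.index_ne_zero this.symm
  have hCc : C = Subgroup.zpowers (⟨t, htN⟩ : N) := by
    ext n
    simp only [hCdef, Subgroup.mem_subgroupOf, Subgroup.mem_zpowers_iff]
    constructor
    · rintro ⟨k, hk⟩
      exact ⟨k, Subtype.ext (by simpa using hk)⟩
    · rintro ⟨k, hk⟩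
      exact ⟨k, by simpa using congrArg Subtype.val hk⟩
  set e : N ≃* FreeGroup (IsFreeGroup.Generators N) := IsFreeGroup.toFreeGroup N with he
  have hsub : Subsingleton (IsFreeGroup.Generators N) :=
    aux_rank_le_one e C hCfi ⟨t, htN⟩ hCc
  -- the generating set is nonempty, since t ≠ 1
  have hne : Nonempty (IsFreeGroup.Generators N) := by
    by_contra hempty
    haveI : IsEmpty (IsFreeGroup.Generators N) := not_nonempty_iff.mp hempty
    have hall : ∀ w : FreeGroup (IsFreeGroup.Generators N), w = 1 := by
      intro w
      induction w using FreeGroup.induction_on with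
      | C1 => rfl
      | of z => exact (IsEmpty.false z).elim
      | inv_of z _ => exact (IsEmpty.false z).elim
      | mul u v hu hv => rw [hu, hv, one_mul]
    have : (⟨t, htN⟩ : N) = 1 := by
      have := hall (e ⟨t, htN⟩)
      have h2 := congrArg e.symm this
      simpa using h2
    have ht1 : t = 1 := congrArg Subtype.val this
    exact hinf (ht1 ▸ IsOfFinOrder.one)
  obtain ⟨x⟩ := hne
  set g : N := e.symm (FreeGroup.of x) with hg
  have hgen : ∀ n : N, n ∈ Subgroup.zpowers g := by
    have hw : ∀ w : FreeGroup (IsFreeGroup.Generators N), e.symm w ∈ Subgroup.zpowers g := by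
      intro w
      induction w using FreeGroup.induction_on with
      | C1 => rw [map_one]; exact one_mem _
      | of z => rw [Subsingleton.elim z x]; exact Subgroup.mem_zpowers g
      | inv_of z hz => rw [map_inv]; exact inv_mem hz
      | mul u v hu hv => rw [map_mul]; exact mul_mem hu hv
    intro n
    have := hw (e n)
    simpa using this
  -- N = ⟨g⟩ as a subgroup of H
  have hNg : N = Subgroup.zpowers (g : H) := by
    apply le_antisymm
    · intro h hh
      obtain ⟨k, hk⟩ := hgen ⟨h, hh⟩
      exact ⟨k, by simpa using congrArg Subtype.val hk⟩
    · exact Subgroup.zpowers_le.mpr g.2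
  obtain ⟨k, hk'⟩ := hgen ⟨t, htN⟩
  have hk : (g : H) ^ k = t := by simpa using congrArg Subtype.val hk'
  -- ⟨t⟩ is normal in H
  have hconj : ∀ h : H, h * t * h⁻¹ ∈ Subgroup.zpowers t := by
    intro h
    have h1 : h * (g : H) * h⁻¹ ∈ N := Subgroup.normalClosure_normal.conj_mem _ g.2 h
    obtain ⟨m, hm'⟩ := hgen ⟨h * (g : H) * h⁻¹, h1⟩
    have hm : (g : H) ^ m = h * (g : H) * h⁻¹ := by
      simpa using congrArg Subtype.val hm'
    refine Subgroup.mem_zpowers_iff.mpr ⟨m, ?_⟩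
    calc t ^ m = ((g : H) ^ k) ^ m := by rw [hk]
    _ = ((g : H) ^ m) ^ k := by rw [← zpow_mul, mul_comm, zpow_mul]
    _ = (h * (g : H) * h⁻¹) ^ k := by rw [hm]
    _ = h * (g : H) ^ k * h⁻¹ := conj_zpow
    _ = h * t * h⁻¹ := by rw [hk]
  haveI hnormal : (Subgroup.zpowers t).Normal := by
    constructor
    intro n hn h
    obtain ⟨j, hj⟩ := Subgroup.mem_zpowers_iff.mp hn
    obtain ⟨m, hm⟩ := Subgroup.mem_zpowers_iff.mp (hconj h)
    refine Subgroup.mem_zpowers_iff.mpr ⟨m * j, ?_⟩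
    calc t ^ (m * j) = (t ^ m) ^ j := by rw [zpow_mul]
    _ = (h * t * h⁻¹) ^ j := by rw [hm]
    _ = h * t ^ j * h⁻¹ := conj_zpow
    _ = h * n * h⁻¹ := by rw [hj]
  have heq : N = Subgroup.zpowers t := by
    apply le_antisymm
    · exact Subgroup.normalClosure_le_normal (by simpa using Subgroup.mem_zpowers t)
    · exact hle
  refine ⟨heq, ?_, ?_⟩
  · rw [heq]
    constructor
    refine ⟨⟨t, Subgroup.mem_zpowers t⟩, fun z => ?_⟩
    obtain ⟨j, hj⟩ := z.2
    exact ⟨j, Subtype.ext (by simpa using hj)⟩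
  · rw [heq]
    exact Set.Infinite.to_subtype (infinite_zpowers.mpr hinf)
end
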